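/- (Octonion Abel Theorem) Suppose there exist constants r₀ > 0, M ∈ ℝ, N₀ ∈ ℕ such that ‖c_ν‖·r₀ⁿ ≤ M for all n > N₀ and multi-indices ν = (n₁,…,n₇) with Σnᵢ = n. Then the series h(x) = Σₙ Σ_{|ν|=n} V_ν(x) c_ν converges compactly on {x ∈ 𝕆 : ‖x‖′_O < r₀}. -/

import Mathlib

open Quaternion Filter
open scoped Classical

/-- The octonions 𝕆, realized via the Cayley–Dickson construction on ℍ. -/
abbrev Octonion : Type := ℍ[ℝ] × ℍ[ℝ]

/-- Cayley–Dickson multiplication: (a,b)·(c,d) = (ac − d̄b, da + bc̄). -/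
noncomputable def omul (x y : Octonion) : Octonion :=
  (x.1 * y.1 - star y.2 * x.2, y.2 * x.1 + x.2 * star y.1)

noncomputable def oOne : Octonion := (1, 0)

/-- Real coordinates x₀,…,x₇ of an octonion in the standard basis e₀,…,e₇. -/
noncomputable def ocoord (x : Octonion) : Fin 8 → ℝ :=
  ![x.1.re, x.1.imI, x.1.imJ, x.1.imK, x.2.re, x.2.imI, x.2.imJ, x.2.imK]

/-- The standard basis e₀,…,e₇ of the octonions. -/
noncomputable def obasis : Fin 8 → Octonion :=
  ![(1, 0), (⟨0, 1, 0, 0⟩, 0), (⟨0, 0, 1, 0⟩, 0), (⟨0, 0, 0, 1⟩, 0),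
    (0, 1), (0, ⟨0, 1, 0, 0⟩), (0, ⟨0, 0, 1, 0⟩), (0, ⟨0, 0, 0, 1⟩)]

/-- Octonionic Fueter variables ζᵢ(x) = xᵢ − eᵢ·x₀, i = 1,…,7. -/
noncomputable def ozeta (t : Fin 7) (x : Octonion) : Octonion :=
  ocoord x t.succ • oOne - ocoord x 0 • obasis t.succ

/-- Words of length n with ν t letters t (t = 1,…,7). -/
noncomputable def owords (n : ℕ) (ν : Fin 7 → ℕ) : Finset (Fin n → Fin 7) :=
  Finset.univ.filter fun w => ∀ t : Fin 7, (Finset.univ.filter fun s => w s = t).card = ν t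

/-- The left-nested product ((…((ζ_{i₁}ζ_{i₂})ζ_{i₃})…)ζ_{iₙ}) along a word. -/
noncomputable def owprod {n : ℕ} (w : Fin n → Fin 7) (x : Octonion) : Octonion :=
  ((List.ofFn w).map fun t => ozeta t x).foldl omul oOne

/-- The homogeneous O-analytic polynomial V_ν. -/
noncomputable def Vnu (n : ℕ) (ν : Fin 7 → ℕ) (x : Octonion) : Octonion :=
  ((n.factorial : ℝ)⁻¹) • ∑ w ∈ owords n ν, owprod w x

/-- The octonionic auxiliary norm ‖x‖′_O = max_{1≤i≤7} √(x₀² + xᵢ²). -/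
noncomputable def onorm' (x : Octonion) : ℝ :=
  Finset.univ.sup' ⟨0, Finset.mem_univ 0⟩
    fun i : Fin 7 => Real.sqrt (ocoord x 0 ^ 2 + ocoord x i.succ ^ 2)

/-- The (multiplicative) Euclidean norm on the octonions. -/
noncomputable def onorm (x : Octonion) : ℝ :=
  Real.sqrt (Quaternion.normSq x.1 + Quaternion.normSq x.2)

/-- Partial sums of the octonionic Taylor series Σₙ Σ_{|ν|=n} V_ν(x)·c_ν. -/
noncomputable def otaylorPartial (c : (Fin 7 → ℕ) → Octonion) (N : ℕ) (x : Octonion) :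
    Octonion :=
  ∑ n ∈ Finset.range N, ∑ ν ∈ Finset.Nat.antidiagonalTuple 7 n, omul (Vnu n ν x) (c ν)


section OctonionAbelAux

/-- The squared Euclidean norm. -/
noncomputable def onormSq (x : Octonion) : ℝ := Quaternion.normSq x.1 + Quaternion.normSq x.2

lemma onorm_eq_sqrt_onormSq (x : Octonion) : onorm x = Real.sqrt (onormSq x) := rfl

lemma onormSq_nonneg (x : Octonion) : 0 ≤ onormSq x :=
  add_nonneg (Quaternion.normSq_nonneg) (Quaternion.normSq_nonneg)

lemma onormSq_omul (x y : Octonion) : onormSq (omul x y) = onormSq x * onormSq y := by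
  simp only [onormSq, omul, Quaternion.normSq_def', Quaternion.re_mul, Quaternion.imI_mul,
    Quaternion.imJ_mul, Quaternion.imK_mul, Quaternion.re_sub, Quaternion.imI_sub,
    Quaternion.imJ_sub, Quaternion.imK_sub, Quaternion.re_add, Quaternion.imI_add,
    Quaternion.imJ_add, Quaternion.imK_add, Quaternion.re_star, Quaternion.imI_star,
    Quaternion.imJ_star, Quaternion.imK_star]
  ring

lemma onorm_nonneg (x : Octonion) : 0 ≤ onorm x := Real.sqrt_nonneg _

lemma onorm_omul (x y : Octonion) : onorm (omul x y) = onorm x * onorm y := by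
  rw [onorm_eq_sqrt_onormSq, onorm_eq_sqrt_onormSq, onorm_eq_sqrt_onormSq, onormSq_omul,
    Real.sqrt_mul (onormSq_nonneg x)]

lemma onorm_oOne : onorm oOne = 1 := by simp [onorm, oOne]

lemma onorm_zero : onorm (0 : Octonion) = 0 := by simp [onorm]

lemma onorm_ozeta (t : Fin 7) (x : Octonion) :
    onorm (ozeta t x) = Real.sqrt (ocoord x 0 ^ 2 + ocoord x t.succ ^ 2) := by
  fin_cases t <;>
  · simp only [ozeta, ocoord, obasis, oOne, onorm, Prod.smul_def, Prod.sub_def, Fin.succ_mk]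
    norm_num [Matrix.cons_val_succ', Matrix.cons_val_zero, Quaternion.normSq_def',
      Quaternion.ext_iff]
    simp -failIfUnchanged only [HSMul.hSMul, SMul.smul, Quaternion.instSMul._aux_1,
      show ∀ a b : ℝ, Mul.mul a b = a * b from fun _ _ => rfl]
    congr 1; ring

lemma onorm_smul (r : ℝ) (x : Octonion) : onorm (r • x) = |r| * onorm x := by
  simp only [onorm, Prod.smul_fst, Prod.smul_snd, Quaternion.normSq_smul, ← mul_add,
    Real.sqrt_mul (sq_nonneg r), Real.sqrt_sq_eq_abs]

lemma onorm_add_le (x y : Octonion) : onorm (x + y) ≤ onorm x + onorm y := by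
  have h1 : ∀ q : ℍ, Quaternion.normSq q = ‖q‖ ^ 2 := by
    intro q; rw [sq, ← Quaternion.normSq_eq_norm_mul_self]
  set a := ‖x.1‖ with ha'; set b := ‖x.2‖ with hb'
  set cc := ‖y.1‖ with hc'; set d := ‖y.2‖ with hd'
  have ha : 0 ≤ a := norm_nonneg _
  have hb : 0 ≤ b := norm_nonneg _
  have hc : 0 ≤ cc := norm_nonneg _
  have hd : 0 ≤ d := norm_nonneg _
  have hA : onorm x = Real.sqrt (a ^ 2 + b ^ 2) := by simp [onorm, h1, ha', hb']
  have hB : onorm y = Real.sqrt (cc ^ 2 + d ^ 2) := by simp [onorm, h1, hc', hd']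
  have hAsq : onorm x ^ 2 = a ^ 2 + b ^ 2 := by rw [hA, Real.sq_sqrt (by positivity)]
  have hBsq : onorm y ^ 2 = cc ^ 2 + d ^ 2 := by rw [hB, Real.sq_sqrt (by positivity)]
  have hAnn : 0 ≤ onorm x := onorm_nonneg x
  have hBnn : 0 ≤ onorm y := onorm_nonneg y
  have hAB : a * cc + b * d ≤ onorm x * onorm y := by
    have h2 : (a * cc + b * d) ^ 2 ≤ (a ^ 2 + b ^ 2) * (cc ^ 2 + d ^ 2) := by
      nlinarith [sq_nonneg (a * d - b * cc)]
    nlinarith [mul_nonneg hAnn hBnn, sq_nonneg (a * cc + b * d - onorm x * onorm y),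
      mul_nonneg (mul_nonneg ha hc) (mul_nonneg hb hd)]
  have e1 : ‖x.1 + y.1‖ ≤ a + cc := norm_add_le _ _
  have e2 : ‖x.2 + y.2‖ ≤ b + d := norm_add_le _ _
  have hxy : onorm (x + y) = Real.sqrt (‖x.1 + y.1‖ ^ 2 + ‖x.2 + y.2‖ ^ 2) := by
    simp [onorm, h1]
  rw [hxy]
  have key : ‖x.1 + y.1‖ ^ 2 + ‖x.2 + y.2‖ ^ 2 ≤ (onorm x + onorm y) ^ 2 := by
    nlinarith [norm_nonneg (x.1 + y.1), norm_nonneg (x.2 + y.2)]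
  calc Real.sqrt (‖x.1 + y.1‖ ^ 2 + ‖x.2 + y.2‖ ^ 2)
      ≤ Real.sqrt ((onorm x + onorm y) ^ 2) := Real.sqrt_le_sqrt key
    _ = onorm x + onorm y := by rw [Real.sqrt_sq (by positivity)]

lemma norm_le_onorm (x : Octonion) : ‖x‖ ≤ onorm x := by
  have h1 : ∀ q : ℍ, Quaternion.normSq q = ‖q‖ ^ 2 := by
    intro q; rw [sq, ← Quaternion.normSq_eq_norm_mul_self]
  have key : ∀ r s : ℝ, 0 ≤ r → r ^ 2 ≤ s → r ≤ Real.sqrt s := fun r s hr h => by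
    rw [← Real.sqrt_sq hr]; exact Real.sqrt_le_sqrt h
  rw [Prod.norm_def, onorm, h1, h1]
  exact max_le (key _ _ (norm_nonneg _) (le_add_of_nonneg_right (by positivity)))
    (key _ _ (norm_nonneg _) (le_add_of_nonneg_left (by positivity)))

lemma onorm_sum_le {ι : Type*} (s : Finset ι) (f : ι → Octonion) :
    onorm (∑ i ∈ s, f i) ≤ ∑ i ∈ s, onorm (f i) :=
  Finset.le_sum_of_subadditive onorm onorm_zero.le onorm_add_le s f

lemma onorm'_nonneg (x : Octonion) : 0 ≤ onorm' x := by
  have h := Finset.le_sup'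
    (f := fun i : Fin 7 => Real.sqrt (ocoord x 0 ^ 2 + ocoord x i.succ ^ 2))
    (b := (0 : Fin 7)) (Finset.mem_univ _)
  rw [onorm']
  exact le_trans (Real.sqrt_nonneg _) h

lemma onorm_ozeta_le (t : Fin 7) (x : Octonion) : onorm (ozeta t x) ≤ onorm' x := by
  rw [onorm_ozeta, onorm']
  exact Finset.le_sup'
    (f := fun i : Fin 7 => Real.sqrt (ocoord x 0 ^ 2 + ocoord x i.succ ^ 2))
    (b := t) (Finset.mem_univ _)

lemma onorm_foldl (l : List Octonion) (a : Octonion) :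
    onorm (l.foldl omul a) = onorm a * (l.map onorm).prod := by
  induction l generalizing a with
  | nil => simp
  | cons h t ih => rw [List.foldl_cons, ih, List.map_cons, List.prod_cons, onorm_omul]; ring

lemma list_prod_le {r : ℝ} (hr : 0 ≤ r) :
    ∀ l : List ℝ, (∀ a ∈ l, 0 ≤ a ∧ a ≤ r) → l.prod ≤ r ^ l.length := by
  intro l
  induction l with
  | nil => simp
  | cons h t ih =>
    intro hmem
    rw [List.prod_cons, List.length_cons, pow_succ']
    have h1 := hmem h (List.mem_cons_self)
    have h2 : t.prod ≤ r ^ t.length := ih fun a ha => hmem a (List.mem_cons_of_mem _ ha)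
    have h3 : 0 ≤ t.prod := List.prod_nonneg fun a ha => (hmem a (List.mem_cons_of_mem _ ha)).1
    exact mul_le_mul h1.2 h2 h3 hr

lemma onorm_owprod_le {n : ℕ} (w : Fin n → Fin 7) (x : Octonion) :
    onorm (owprod w x) ≤ onorm' x ^ n := by
  rw [owprod, onorm_foldl, onorm_oOne, one_mul]
  have hlen : ((((List.ofFn w).map fun t => ozeta t x).map onorm)).length = n := by simp
  have := list_prod_le (onorm'_nonneg x)
    ((((List.ofFn w).map fun t => ozeta t x).map onorm)) ?_
  · rwa [hlen] at this
  · intro a ha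
    simp only [List.mem_map] at ha
    obtain ⟨z, ⟨t, _, rfl⟩, rfl⟩ := ha
    exact ⟨onorm_nonneg _, onorm_ozeta_le t x⟩

lemma onorm_Vnu_le (n : ℕ) (ν : Fin 7 → ℕ) (x : Octonion) :
    onorm (Vnu n ν x) ≤ (n.factorial : ℝ)⁻¹ * (((owords n ν).card : ℝ) * onorm' x ^ n) := by
  rw [Vnu, onorm_smul, abs_of_nonneg (by positivity)]
  refine mul_le_mul_of_nonneg_left ?_ (by positivity)
  calc onorm (∑ w ∈ owords n ν, owprod w x) ≤ ∑ w ∈ owords n ν, onorm (owprod w x) :=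
        onorm_sum_le _ _
    _ ≤ ∑ _w ∈ owords n ν, onorm' x ^ n :=
        Finset.sum_le_sum fun w _ => onorm_owprod_le w x
    _ = ((owords n ν).card : ℝ) * onorm' x ^ n := by
        rw [Finset.sum_const, nsmul_eq_mul]

lemma sum_card_owords (n : ℕ) :
    ∑ ν ∈ Finset.Nat.antidiagonalTuple 7 n, (owords n ν).card = 7 ^ n := by
  classical
  have hmem : ∀ w : Fin n → Fin 7,
      (fun t => (Finset.univ.filter fun s => w s = t).card) ∈
        Finset.Nat.antidiagonalTuple 7 n := by
    intro w
    rw [Finset.Nat.mem_antidiagonalTuple]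
    have := Finset.card_eq_sum_card_fiberwise
      (s := (Finset.univ : Finset (Fin n))) (t := (Finset.univ : Finset (Fin 7)))
      (f := w) (fun y _ => Finset.mem_univ _)
    simpa using this.symm
  have h := Finset.card_eq_sum_card_fiberwise
    (s := (Finset.univ : Finset (Fin n → Fin 7)))
    (t := Finset.Nat.antidiagonalTuple 7 n)
    (f := fun w t => (Finset.univ.filter fun s => w s = t).card)
    (fun w _ => hmem w)
  have hcard : (Finset.univ : Finset (Fin n → Fin 7)).card = 7 ^ n := by
    simp [Finset.card_univ]
  rw [hcard] at h
  rw [h]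
  refine Finset.sum_congr rfl fun ν _ => ?_
  congr 1
  rw [owords]
  exact Finset.filter_congr fun w _ => by simp [funext_iff]

lemma continuous_ocoord (j : Fin 8) : Continuous fun x : Octonion => ocoord x j := by
  fin_cases j <;>
    first
      | exact Quaternion.continuous_re.comp continuous_fst
      | exact Quaternion.continuous_imI.comp continuous_fst
      | exact Quaternion.continuous_imJ.comp continuous_fst
      | exact Quaternion.continuous_imK.comp continuous_fst
      | exact Quaternion.continuous_re.comp continuous_snd
      | exact Quaternion.continuous_imI.comp continuous_snd
      | exact Quaternion.continuous_imJ.comp continuous_snd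
      | exact Quaternion.continuous_imK.comp continuous_snd

lemma continuous_finset_sup' {ι : Type*} (s : Finset ι) (hs : s.Nonempty)
    (f : ι → Octonion → ℝ) (hf : ∀ i, Continuous (f i)) :
    Continuous fun x => s.sup' hs fun i => f i x := by
  classical
  induction s using Finset.cons_induction with
  | empty => exact absurd hs (by simp)
  | cons a s ha ih =>
    rcases s.eq_empty_or_nonempty with rfl | hs'
    · simpa using hf a
    · simp only [Finset.sup'_cons hs']
      exact (hf a).sup (ih hs')

lemma continuous_onorm' : Continuous onorm' := by
  unfold onorm'
  exact continuous_finset_sup' _ _ _ fun i =>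
    Real.continuous_sqrt.comp
      ((((continuous_ocoord 0).pow 2).add ((continuous_ocoord i.succ).pow 2)))

end OctonionAbelAux

set_option maxHeartbeats 2000000 in
/-- Octonion Abel theorem: if ‖c_ν‖·r₀ⁿ ≤ M for all n > N₀ and |ν| = n, then the series
Σₙ Σ_{|ν|=n} V_ν(x)·c_ν converges uniformly on compact subsets of {x : ‖x‖′_O < r₀}. -/
theorem octonion_abel (c : (Fin 7 → ℕ) → Octonion) (r₀ M : ℝ) (N₀ : ℕ) (hr₀ : 0 < r₀)
    (hbound : ∀ n : ℕ, n > N₀ → ∀ ν ∈ Finset.Nat.antidiagonalTuple 7 n, onorm (c ν) * r₀ ^ n ≤ M) :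
    ∃ f : Octonion → Octonion, ∀ K : Set Octonion, K ⊆ {x | onorm' x < r₀} → IsCompact K →
      TendstoUniformlyOn (otaylorPartial c) f atTop K := by
  classical
  set g : ℕ → Octonion → Octonion :=
    fun n x => ∑ ν ∈ Finset.Nat.antidiagonalTuple 7 n, omul (Vnu n ν x) (c ν) with hg
  refine ⟨fun x => ∑' n, g n x, ?_⟩
  intro K hK hKc
  rcases K.eq_empty_or_nonempty with rfl | hKne
  · exact tendstoUniformlyOn_empty
  obtain ⟨z, hzK, hz⟩ := hKc.exists_isMaxOn hKne continuous_onorm'.continuousOn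
  set r := onorm' z with hr
  have hr0 : 0 ≤ r := onorm'_nonneg z
  have hrr : r < r₀ := hK hzK
  set B := M ⊔ ∑ m ∈ Finset.range (N₀ + 1),
      ∑ ν ∈ Finset.Nat.antidiagonalTuple 7 m, onorm (c ν) * r₀ ^ m with hBdef
  have hBb : ∀ n : ℕ, ∀ ν ∈ Finset.Nat.antidiagonalTuple 7 n, onorm (c ν) * r₀ ^ n ≤ B := by
    intro n ν hν
    rcases le_or_gt n N₀ with h | h
    · refine le_trans ?_ le_sup_right
      have h1 : onorm (c ν) * r₀ ^ n ≤
          ∑ ν' ∈ Finset.Nat.antidiagonalTuple 7 n, onorm (c ν') * r₀ ^ n := by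
        apply Finset.single_le_sum (f := fun ν' => onorm (c ν') * r₀ ^ n) ?_ hν
        intro ν' _
        exact mul_nonneg (onorm_nonneg _) (by positivity)
      have h2 : ∑ ν' ∈ Finset.Nat.antidiagonalTuple 7 n, onorm (c ν') * r₀ ^ n ≤
          ∑ m ∈ Finset.range (N₀ + 1),
            ∑ ν' ∈ Finset.Nat.antidiagonalTuple 7 m, onorm (c ν') * r₀ ^ m := by
        apply Finset.single_le_sum
          (f := fun m => ∑ ν' ∈ Finset.Nat.antidiagonalTuple 7 m, onorm (c ν') * r₀ ^ m) ?_
          (Finset.mem_range.mpr (by omega))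
        intro m _
        exact Finset.sum_nonneg fun ν' _ => mul_nonneg (onorm_nonneg _) (by positivity)
      exact h1.trans h2
    · exact le_trans (hbound n h ν hν) le_sup_left
  set u : ℕ → ℝ := fun n => B * ((7 * r / r₀) ^ n / n.factorial) with hu_def
  have hu : Summable u := (Real.summable_pow_div_factorial (7 * r / r₀)).mul_left B
  have hfu : ∀ n : ℕ, ∀ x ∈ K, ‖g n x‖ ≤ u n := by
    intro n x hx
    have hxr : onorm' x ≤ r := hz hx
    have step : ∀ ν ∈ Finset.Nat.antidiagonalTuple 7 n,
        onorm (omul (Vnu n ν x) (c ν)) ≤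
          (n.factorial : ℝ)⁻¹ * (((owords n ν).card : ℝ) * r ^ n) * (B / r₀ ^ n) := by
      intro ν hν
      rw [onorm_omul]
      have h1 : onorm (Vnu n ν x) ≤ (n.factorial : ℝ)⁻¹ * (((owords n ν).card : ℝ) * r ^ n) := by
        refine le_trans (onorm_Vnu_le n ν x) ?_
        have hpow : onorm' x ^ n ≤ r ^ n := pow_le_pow_left₀ (onorm'_nonneg x) hxr n
        gcongr
      have h2 : onorm (c ν) ≤ B / r₀ ^ n := by
        rw [le_div_iff₀ (by positivity)]
        exact hBb n ν hν
      exact mul_le_mul h1 h2 (onorm_nonneg _) (by positivity)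
    calc ‖g n x‖ ≤ onorm (g n x) := norm_le_onorm _
      _ ≤ ∑ ν ∈ Finset.Nat.antidiagonalTuple 7 n, onorm (omul (Vnu n ν x) (c ν)) :=
          onorm_sum_le _ _
      _ ≤ ∑ ν ∈ Finset.Nat.antidiagonalTuple 7 n,
            (n.factorial : ℝ)⁻¹ * (((owords n ν).card : ℝ) * r ^ n) * (B / r₀ ^ n) :=
          Finset.sum_le_sum step
      _ = u n := by
          have hc7 : ∑ ν ∈ Finset.Nat.antidiagonalTuple 7 n, ((owords n ν).card : ℝ) =
              (7 : ℝ) ^ n := by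
            rw [← Nat.cast_sum]
            exact_mod_cast congrArg (Nat.cast (R := ℝ)) (sum_card_owords n)
          have : ∑ ν ∈ Finset.Nat.antidiagonalTuple 7 n,
              (n.factorial : ℝ)⁻¹ * (((owords n ν).card : ℝ) * r ^ n) * (B / r₀ ^ n) =
              (n.factorial : ℝ)⁻¹ * ((∑ ν ∈ Finset.Nat.antidiagonalTuple 7 n,
                ((owords n ν).card : ℝ)) * r ^ n) * (B / r₀ ^ n) := by
            simp only [Finset.mul_sum, Finset.sum_mul, mul_assoc]
          rw [this, hc7, hu_def]
          have hfac : (n.factorial : ℝ) ≠ 0 := Nat.cast_ne_zero.mpr n.factorial_ne_zero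
          have hr₀ne : r₀ ≠ 0 := ne_of_gt hr₀
          field_simp
          rw [div_pow, mul_pow, div_eq_mul_inv]
          linear_combination (-(7 ^ n * r ^ n * B)) * mul_inv_cancel₀ (pow_ne_zero n hr₀ne)
  have := tendstoUniformlyOn_tsum_nat hu (f := g) (s := K) (fun n x hx => hfu n x hx)
  exact this
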